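/- Let n ≥ 1, let C ∈ ℝ^{n×n} be symmetric, and let p be a positive integer with p² ≥ 2n. If V* ∈ Ob(p,n) is a global maximizer of V ↦ tr(C VᵀV) over Ob(p,n), then tr(C (V*)ᵀV*) = SDP(C); that is, X* = (V*)ᵀV* is a global maximizer of tr(CX) over the set of symmetric positive semidefinite matrices with unit diagonal. -/

import Mathlib

open Matrix

section Helpers
open Finset


variable {n : ℕ}

lemma conjT_eq_transpose {k m : ℕ} (U : Matrix (Fin k) (Fin m) ℝ) : Uᴴ = Uᵀ := by
  ext i j; simp [conjTranspose_apply]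

lemma quad_nonneg {X : Matrix (Fin n) (Fin n) ℝ} (hX : X.PosSemidef) (u : Fin n → ℝ) :
    0 ≤ u ⬝ᵥ X *ᵥ u := by
  have := hX.dotProduct_mulVec_nonneg u
  simpa using this

lemma posSemidef_of_quad {M : Matrix (Fin n) (Fin n) ℝ} (hsym : Mᵀ = M)
    (h : ∀ x, 0 ≤ x ⬝ᵥ (M *ᵥ x)) : M.PosSemidef := by
  refine .of_dotProduct_mulVec_nonneg (by rw [IsHermitian, conjT_eq_transpose, hsym]) fun x => by simpa using h x

lemma rank_lt_of_ker {X X' : Matrix (Fin n) (Fin n) ℝ}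
    (hsub : ∀ y, X *ᵥ y = 0 → X' *ᵥ y = 0) (z : Fin n → ℝ)
    (hz1 : X' *ᵥ z = 0) (hz2 : X *ᵥ z ≠ 0) : X'.rank < X.rank := by
  have hker : LinearMap.ker X.mulVecLin < LinearMap.ker X'.mulVecLin := by
    rw [SetLike.lt_iff_le_and_exists]
    refine ⟨fun y hy => ?_, z, ?_, ?_⟩
    · rw [LinearMap.mem_ker, Matrix.mulVecLin_apply] at hy ⊢
      exact hsub y hy
    · rw [LinearMap.mem_ker, Matrix.mulVecLin_apply]; exact hz1
    · rw [LinearMap.mem_ker, Matrix.mulVecLin_apply]; exact hz2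
  have h1 := LinearMap.finrank_range_add_finrank_ker X.mulVecLin
  have h2 := LinearMap.finrank_range_add_finrank_ker X'.mulVecLin
  have h3 := Submodule.finrank_lt_finrank_of_lt hker
  rw [Matrix.rank, Matrix.rank]
  omega

lemma dot_mulVec_expand (M : Matrix (Fin n) (Fin n) ℝ) (x y : Fin n → ℝ) :
    x ⬝ᵥ (M *ᵥ y) = ∑ i, ∑ j, x i * M i j * y j := by
  simp only [dotProduct, mulVec]
  exact Finset.sum_congr rfl fun i _ => by
    rw [Finset.mul_sum]; exact Finset.sum_congr rfl fun j _ => by ring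

lemma step {C X U S B Wb : Matrix (Fin n) (Fin n) ℝ} {d μ : Fin n → ℝ}
    (hopt : ∀ Y : Matrix (Fin n) (Fin n) ℝ, Y.PosSemidef → (∀ i, Y i i = 1) →
      (C * Y).trace ≤ (C * X).trace)
    (hdiag : ∀ i, X i i = 1)
    (hd : ∀ i, 0 ≤ d i)
    (hXeq : X = U * Matrix.diagonal d * Uᵀ)
    (hUtU : Uᵀ * U = 1) (hUUt : U * Uᵀ = 1)
    (hdiagA : ∀ k, (U * S * Uᵀ) k k = 0)
    (hSB : ∀ i j, S i j = Real.sqrt (d i) * B i j * Real.sqrt (d j))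
    (hBsupp : ∀ i j, d i = 0 → B i j = 0)
    (hBW : B = Wb * Matrix.diagonal μ * Wbᵀ)
    (hWtW : Wbᵀ * Wb = 1) (hWWt : Wb * Wbᵀ = 1)
    (hneg : ∃ i, μ i < 0) :
    ∃ X' : Matrix (Fin n) (Fin n) ℝ, X'.PosSemidef ∧ (∀ i, X' i i = 1) ∧
      (C * X').trace = (C * X).trace ∧ X'.rank < X.rank := by
  classical
  -- symmetry facts
  have hBsym : ∀ i j, B j i = B i j := by
    intro i j
    rw [hBW]
    rw [Matrix.mul_apply, Matrix.mul_apply]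
    refine Finset.sum_congr rfl fun k _ => ?_
    rw [Matrix.mul_diagonal, Matrix.mul_diagonal, Matrix.transpose_apply,
      Matrix.transpose_apply]
    ring
  have hSsym : Sᵀ = S := by
    ext i j
    rw [Matrix.transpose_apply, hSB i j, hSB j i, hBsym i j]
    ring
  -- delta from W W^T = 1
  have hδ : ∀ i j, (∑ k, Wb i k * Wb j k) = if i = j then (1:ℝ) else 0 := by
    intro i j
    have := congrFun (congrFun hWWt i) j
    simpa [Matrix.mul_apply, Matrix.one_apply, Matrix.transpose_apply] using this
  have norm_pres : ∀ x : Fin n → ℝ, (∑ k, ((Wbᵀ *ᵥ x) k)^2) = ∑ i, (x i)^2 := by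
    intro x
    calc ∑ k, ((Wbᵀ *ᵥ x) k)^2
        = ∑ k, ∑ i, ∑ j, (Wb i k * x i) * (Wb j k * x j) := by
          refine Finset.sum_congr rfl fun k _ => ?_
          rw [pow_two]
          simp only [mulVec, dotProduct, transpose_apply]
          rw [Finset.sum_mul_sum]
      _ = ∑ i, ∑ j, (x i * x j) * ∑ k, Wb i k * Wb j k := by
          rw [Finset.sum_comm]
          refine Finset.sum_congr rfl fun i _ => ?_
          rw [Finset.sum_comm]
          refine Finset.sum_congr rfl fun j _ => ?_
          rw [Finset.mul_sum]
          exact Finset.sum_congr rfl fun k _ => by ring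
      _ = ∑ i, (x i)^2 := by
          refine Finset.sum_congr rfl fun i _ => ?_
          rw [Finset.sum_congr rfl fun j (_ : j ∈ Finset.univ) => by rw [hδ i j]]
          simp only [mul_ite, mul_one, mul_zero, Finset.sum_ite_eq, Finset.mem_univ,
            if_true]
          rw [pow_two]
  have hBentry : ∀ i j, B i j = ∑ k, Wb i k * μ k * Wb j k := by
    intro i j
    rw [hBW, Matrix.mul_apply]
    refine Finset.sum_congr rfl fun k _ => ?_
    rw [Matrix.mul_diagonal, Matrix.transpose_apply]
  have quadB : ∀ x : Fin n → ℝ, x ⬝ᵥ (B *ᵥ x) = ∑ k, μ k * ((Wbᵀ *ᵥ x) k)^2 := by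
    intro x
    have e1 : ∀ k, μ k * ((Wbᵀ *ᵥ x) k)^2 =
        ∑ i, ∑ j, x i * Wb i k * μ k * (Wb j k * x j) := by
      intro k
      rw [pow_two]
      simp only [mulVec, dotProduct, transpose_apply]
      rw [Finset.sum_mul_sum, Finset.mul_sum]
      refine Finset.sum_congr rfl fun i _ => ?_
      rw [Finset.mul_sum]
      exact Finset.sum_congr rfl fun j _ => by ring
    have e2 : ∀ i j, x i * B i j * x j =
        ∑ k, x i * Wb i k * μ k * (Wb j k * x j) := by
      intro i j
      rw [hBentry i j, Finset.mul_sum, Finset.sum_mul]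
      exact Finset.sum_congr rfl fun k _ => by ring
    rw [dot_mulVec_expand]
    rw [Finset.sum_congr rfl fun i (_ : i ∈ Finset.univ) =>
      Finset.sum_congr rfl fun j (_ : j ∈ Finset.univ) => e2 i j]
    rw [Finset.sum_congr rfl fun k (_ : k ∈ Finset.univ) => e1 k]
    exact (Finset.sum_congr rfl fun i _ => Finset.sum_comm).trans Finset.sum_comm
  -- the w-vector
  set A := U * S * Uᵀ with hA
  have quadS : ∀ x : Fin n → ℝ, x ⬝ᵥ (S *ᵥ x) =
      ∑ k, μ k * ((Wbᵀ *ᵥ (fun i => Real.sqrt (d i) * x i)) k)^2 := by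
    intro x
    rw [← quadB (fun i => Real.sqrt (d i) * x i)]
    rw [dot_mulVec_expand, dot_mulVec_expand]
    refine Finset.sum_congr rfl fun i _ => Finset.sum_congr rfl fun j _ => ?_
    rw [hSB i j]
    ring
  have quadD : ∀ x : Fin n → ℝ, x ⬝ᵥ (Matrix.diagonal d *ᵥ x) =
      ∑ k, ((Wbᵀ *ᵥ (fun i => Real.sqrt (d i) * x i)) k)^2 := by
    intro x
    rw [norm_pres]
    rw [dot_mulVec_expand]
    calc ∑ i, ∑ j, x i * Matrix.diagonal d i j * x j
        = ∑ i, (Real.sqrt (d i) * x i)^2 := by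
          refine Finset.sum_congr rfl fun i _ => ?_
          rw [Finset.sum_eq_single i]
          · rw [Matrix.diagonal_apply_eq]
            linear_combination (-(x i * x i)) * Real.mul_self_sqrt (hd i)
          · intro j _ hj
            rw [Matrix.diagonal_apply_ne' _ hj, mul_zero, zero_mul]
          · intro h; exact absurd (Finset.mem_univ _) h
      _ = _ := rfl
  have quadN : ∀ (t : ℝ) (x : Fin n → ℝ),
      x ⬝ᵥ ((Matrix.diagonal d + t • S) *ᵥ x) =
      ∑ k, (1 + t * μ k) * ((Wbᵀ *ᵥ (fun i => Real.sqrt (d i) * x i)) k)^2 := by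
    intro t x
    rw [Matrix.add_mulVec, dotProduct_add, Matrix.smul_mulVec, dotProduct_smul,
      quadD, quadS, smul_eq_mul, Finset.mul_sum, ← Finset.sum_add_distrib]
    exact Finset.sum_congr rfl fun k _ => by ring
  have hNsym : ∀ t : ℝ, (Matrix.diagonal d + t • S)ᵀ = Matrix.diagonal d + t • S := by
    intro t
    rw [Matrix.transpose_add, Matrix.diagonal_transpose, Matrix.transpose_smul, hSsym]
  have hpsdN : ∀ t : ℝ, (∀ i, 0 ≤ 1 + t * μ i) → (Matrix.diagonal d + t • S).PosSemidef := by
    intro t ht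
    refine posSemidef_of_quad (hNsym t) fun x => ?_
    rw [quadN]
    exact Finset.sum_nonneg fun k _ => mul_nonneg (ht k) (sq_nonneg _)
  have hX't : ∀ t : ℝ, U * (Matrix.diagonal d + t • S) * Uᵀ = X + t • A := by
    intro t
    rw [Matrix.mul_add, Matrix.add_mul, hXeq, hA]
    congr 1
    rw [Matrix.mul_smul, Matrix.smul_mul]
  have hpsdX' : ∀ t : ℝ, (∀ i, 0 ≤ 1 + t * μ i) → (X + t • A).PosSemidef := by
    intro t ht
    rw [← hX't t]
    have := (hpsdN t ht).mul_mul_conjTranspose_same U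
    rwa [conjT_eq_transpose] at this
  have hdiagX' : ∀ t : ℝ, ∀ i, (X + t • A) i i = 1 := by
    intro t i
    rw [Matrix.add_apply, Matrix.smul_apply, hdiagA i, smul_zero, add_zero, hdiag i]
  have htrace : ∀ t : ℝ, (C * (X + t • A)).trace = (C * X).trace + t * (C * A).trace := by
    intro t
    rw [Matrix.mul_add, Matrix.trace_add, Matrix.mul_smul, Matrix.trace_smul, smul_eq_mul]
  -- trace of C*A is zero
  set K := (∑ i, |μ i|) + 1 with hKdef
  have hK : 0 < K := by
    have : 0 ≤ ∑ i, |μ i| := Finset.sum_nonneg fun i _ => abs_nonneg _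
    linarith
  have hbound : ∀ i, |μ i| ≤ K - 1 := by
    intro i
    have := Finset.single_le_sum (f := fun i => |μ i|) (fun j _ => abs_nonneg _)
      (Finset.mem_univ i)
    linarith
  have hcoef1 : ∀ i, 0 ≤ 1 + (1/K) * μ i := by
    intro i
    have h1 := (abs_le.mp (hbound i)).1
    have h2 : 0 ≤ (K + μ i) / K := div_nonneg (by linarith) (le_of_lt hK)
    have h3 : 1 + (1/K) * μ i = (K + μ i)/K := by field_simp
    linarith [h3.ge, h3.le]
  have hcoef2 : ∀ i, 0 ≤ 1 + (-(1/K)) * μ i := by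
    intro i
    have h1 := (abs_le.mp (hbound i)).2
    have h2 : 0 ≤ (K - μ i) / K := div_nonneg (by linarith) (le_of_lt hK)
    have h3 : 1 + (-(1/K)) * μ i = (K - μ i)/K := by field_simp; ring
    linarith [h3.ge, h3.le]
  have hfeas1 := hopt (X + (1/K) • A) (hpsdX' _ hcoef1) (hdiagX' _)
  have hfeas2 := hopt (X + (-(1/K)) • A) (hpsdX' _ hcoef2) (hdiagX' _)
  rw [htrace] at hfeas1 hfeas2
  have hKinv : 0 < 1/K := by positivity
  have htrA : (C * A).trace = 0 := by nlinarith [hfeas1, hfeas2, hKinv]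
  -- minimal eigenvalue
  obtain ⟨i0, hi0⟩ := hneg
  obtain ⟨istar, -, hmin⟩ := Finset.exists_min_image Finset.univ μ ⟨i0, Finset.mem_univ i0⟩
  have hμs : μ istar < 0 := lt_of_le_of_lt (hmin i0 (Finset.mem_univ i0)) hi0
  have hμne : μ istar ≠ 0 := ne_of_lt hμs
  set ts := -(μ istar)⁻¹ with hts
  have hts0 : 0 < ts := by
    rw [hts]
    have : (μ istar)⁻¹ < 0 := inv_lt_zero.mpr hμs
    linarith
  have htsμ : ts * μ istar = -1 := by
    rw [hts]
    field_simp
  have hcoefs : ∀ i, 0 ≤ 1 + ts * μ i := by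
    intro i
    have h1 : ts * μ istar ≤ ts * μ i :=
      mul_le_mul_of_nonneg_left (hmin i (Finset.mem_univ i)) (le_of_lt hts0)
    rw [htsμ] at h1
    linarith
  set X' := X + ts • A with hX'def
  have hpsd' : X'.PosSemidef := hpsdX' ts hcoefs
  have hdiag' : ∀ i, X' i i = 1 := hdiagX' ts
  have htrace' : (C * X').trace = (C * X).trace := by
    rw [hX'def, htrace, htrA, mul_zero, add_zero]
  -- rank reduction
  set w0 : Fin n → ℝ := fun k => Wb k istar with hw0
  have hBw0 : B *ᵥ w0 = μ istar • w0 := by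
    have h1 : w0 = Wb *ᵥ Pi.single istar 1 := by
      funext k
      simp [hw0, Matrix.mulVec_single]
    rw [h1, Matrix.mulVec_mulVec, hBW, Matrix.mul_assoc (Wb * Matrix.diagonal μ), hWtW,
      Matrix.mul_one]
    funext k
    simp [Matrix.mulVec_single, Matrix.mul_diagonal, mul_comm]
  have hw0ne : ∃ k, w0 k ≠ 0 := by
    by_contra h
    push_neg at h
    have h1 := congrFun (congrFun hWtW istar) istar
    rw [Matrix.mul_apply, Matrix.one_apply_eq] at h1
    have h2 : ∀ k : Fin n, Wbᵀ istar k * Wb k istar = 0 := by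
      intro k
      have h3 : Wb k istar = 0 := by simpa [hw0] using h k
      rw [Matrix.transpose_apply, h3, mul_zero]
    rw [Finset.sum_congr rfl (fun k _ => h2 k), Finset.sum_const_zero] at h1
    exact zero_ne_one h1
  have hw0supp : ∀ i, d i = 0 → w0 i = 0 := by
    intro i hdi
    have h1 := congrFun hBw0 i
    have h2 : (B *ᵥ w0) i = 0 := by
      rw [Matrix.mulVec, dotProduct]
      exact Finset.sum_eq_zero fun j _ => by rw [hBsupp i j hdi, zero_mul]
    rw [h2] at h1
    have h3 : μ istar * w0 i = 0 := h1.symm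
    rcases mul_eq_zero.mp h3 with h | h
    · exact absurd h hμne
    · exact h
  set uvec : Fin n → ℝ := fun i => w0 i / Real.sqrt (d i) with huvec
  have hvu : ∀ i, Real.sqrt (d i) * uvec i = w0 i := by
    intro i
    rcases eq_or_ne (d i) 0 with h | h
    · rw [hw0supp i h, huvec]
      simp [h, hw0supp i h]
    · have hne : Real.sqrt (d i) ≠ 0 := Real.sqrt_ne_zero'.mpr (lt_of_le_of_ne (hd i) (Ne.symm h))
      rw [huvec]
      rw [mul_comm]
      exact div_mul_cancel₀ _ hne
  have hDu : Matrix.diagonal d *ᵥ uvec = fun i => Real.sqrt (d i) * w0 i := by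
    funext i
    rw [Matrix.mulVec_diagonal, ← hvu i]
    linear_combination (-(uvec i)) * Real.mul_self_sqrt (hd i)
  have hSu : S *ᵥ uvec = fun i => Real.sqrt (d i) * (μ istar * w0 i) := by
    funext i
    rw [Matrix.mulVec, dotProduct]
    have h1 : ∀ j, S i j * uvec j = Real.sqrt (d i) * (B i j * w0 j) := by
      intro j
      rw [hSB i j, ← hvu j]
      ring
    rw [Finset.sum_congr rfl fun j _ => h1 j, ← Finset.mul_sum]
    have h2 : (∑ j, B i j * w0 j) = μ istar * w0 i := by
      have := congrFun hBw0 i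
      rw [Matrix.mulVec, dotProduct] at this
      simpa using this
    rw [h2]
  have hNu : (Matrix.diagonal d + ts • S) *ᵥ uvec = 0 := by
    rw [Matrix.add_mulVec, Matrix.smul_mulVec, hDu, hSu]
    funext i
    simp only [Pi.add_apply, Pi.smul_apply, smul_eq_mul, Pi.zero_apply]
    have h0 : 1 + ts * μ istar = 0 := by rw [htsμ]; ring
    linear_combination (Real.sqrt (d i) * w0 i) * h0
  set z := U *ᵥ uvec with hz
  have hX'U : X' * U = U * (Matrix.diagonal d + ts • S) := by
    rw [hX'def, ← hX't ts, Matrix.mul_assoc (U * (Matrix.diagonal d + ts • S)), hUtU,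
      Matrix.mul_one]
  have hX'z : X' *ᵥ z = 0 := by
    rw [hz, Matrix.mulVec_mulVec, hX'U, ← Matrix.mulVec_mulVec, hNu, Matrix.mulVec_zero]
  have hXU : X * U = U * Matrix.diagonal d := by
    rw [hXeq, Matrix.mul_assoc (U * Matrix.diagonal d), hUtU, Matrix.mul_one]
  have hXz : X *ᵥ z ≠ 0 := by
    rw [hz, Matrix.mulVec_mulVec, hXU, ← Matrix.mulVec_mulVec, hDu]
    intro hcon
    obtain ⟨k, hk⟩ := hw0ne
    have hdk : d k ≠ 0 := fun h => hk (hw0supp k h)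
    have hsk : Real.sqrt (d k) ≠ 0 := Real.sqrt_ne_zero'.mpr
      (lt_of_le_of_ne (hd k) (Ne.symm hdk))
    have h1 : Uᵀ *ᵥ (U *ᵥ (fun i => Real.sqrt (d i) * w0 i)) = 0 := by
      rw [hcon, Matrix.mulVec_zero]
    rw [Matrix.mulVec_mulVec, hUtU, Matrix.one_mulVec] at h1
    have h2 := congrFun h1 k
    simp only [Pi.zero_apply] at h2
    exact (mul_ne_zero hsk hk) h2
  have hker : ∀ y, X *ᵥ y = 0 → X' *ᵥ y = 0 := by
    intro y hy
    have hUX : Uᵀ * X = Matrix.diagonal d * Uᵀ := by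
      rw [hXeq, ← Matrix.mul_assoc, ← Matrix.mul_assoc, hUtU, Matrix.one_mul]
    have hx : Matrix.diagonal d *ᵥ (Uᵀ *ᵥ y) = 0 := by
      rw [Matrix.mulVec_mulVec, ← hUX, ← Matrix.mulVec_mulVec, hy, Matrix.mulVec_zero]
    have hdx : ∀ i, d i * (Uᵀ *ᵥ y) i = 0 := by
      intro i
      have := congrFun hx i
      rwa [Matrix.mulVec_diagonal] at this
    have hSx : S *ᵥ (Uᵀ *ᵥ y) = 0 := by
      funext i
      rw [Matrix.mulVec, dotProduct]
      simp only [Pi.zero_apply]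
      refine Finset.sum_eq_zero fun j _ => ?_
      rcases eq_or_ne (d j) 0 with h | h
      · rw [hSB i j, h, Real.sqrt_zero, mul_zero, zero_mul]
      · have : (Uᵀ *ᵥ y) j = 0 := by
          rcases mul_eq_zero.mp (hdx j) with h' | h'
          · exact absurd h' h
          · exact h'
        rw [this, mul_zero]
    have hAy : A *ᵥ y = 0 := by
      rw [hA, ← Matrix.mulVec_mulVec, ← Matrix.mulVec_mulVec, hSx, Matrix.mulVec_zero]
    rw [hX'def, Matrix.add_mulVec, hy, Matrix.smul_mulVec, hAy, smul_zero, add_zero]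
  exact ⟨X', hpsd', hdiag', htrace', rank_lt_of_ker hker z hX'z hXz⟩

lemma spectral_real {n : ℕ} {Y : Matrix (Fin n) (Fin n) ℝ} (hY : Y.IsHermitian) :
    ∃ (U : Matrix (Fin n) (Fin n) ℝ) (d : Fin n → ℝ),
      Uᵀ * U = 1 ∧ U * Uᵀ = 1 ∧ Y = U * Matrix.diagonal d * Uᵀ ∧
      (Y.PosSemidef → ∀ i, 0 ≤ d i) ∧
      Y.rank = (Finset.univ.filter (fun i => d i ≠ 0)).card := by
  refine ⟨(hY.eigenvectorUnitary : Matrix (Fin n) (Fin n) ℝ), hY.eigenvalues, ?_, ?_, ?_, ?_, ?_⟩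
  · rw [← conjT_eq_transpose]
    exact (Matrix.mem_unitaryGroup_iff').mp (hY.eigenvectorUnitary).2
  · rw [← conjT_eq_transpose]
    exact (Matrix.mem_unitaryGroup_iff).mp (hY.eigenvectorUnitary).2
  · have := hY.spectral_theorem
    rw [← conjT_eq_transpose]
    simpa [Matrix.star_eq_conjTranspose] using this
  · intro hpsd i; exact hpsd.eigenvalues_nonneg i
  · rw [hY.rank_eq_card_non_zero_eigs, Fintype.card_subtype]

lemma pairs_card {n : ℕ} (s : Finset (Fin n)) :
    ((s ×ˢ s).filter fun q => q.1 ≤ q.2).card * 2 = s.card * (s.card + 1) := by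
  classical
  set T1 := (s ×ˢ s).filter fun q => q.1 ≤ q.2 with hT1
  set T2 := (s ×ˢ s).filter fun q => q.2 ≤ q.1 with hT2
  have hcard : T2.card = T1.card := by
    apply Finset.card_nbij (fun q => (q.2, q.1))
    · intro q hq
      simp only [hT1, hT2, Finset.mem_coe, Finset.mem_filter, Finset.mem_product] at hq ⊢
      tauto
    · intro a ha b hb hab
      simp only at hab
      exact Prod.ext (congrArg Prod.snd hab) (congrArg Prod.fst hab)
    · intro q hq
      simp only [hT1, hT2, Set.mem_image, Finset.mem_coe, Finset.mem_filter,
        Finset.mem_product] at hq ⊢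
      exact ⟨(q.2, q.1), by tauto⟩
  have hunion : T1 ∪ T2 = s ×ˢ s := by
    ext q
    simp only [hT1, hT2, Finset.mem_union, Finset.mem_filter, Finset.mem_product]
    constructor
    · tauto
    · intro h; rcases le_total q.1 q.2 with h'|h' <;> tauto
  have hinter : T1 ∩ T2 = s.image (fun a => (a,a)) := by
    ext q
    simp only [hT1, hT2, Finset.mem_inter, Finset.mem_filter, Finset.mem_product,
      Finset.mem_image]
    constructor
    · rintro ⟨⟨⟨h1,h2⟩,h3⟩,⟨_,h4⟩⟩
      exact ⟨q.1, h1, Prod.ext rfl (le_antisymm h3 h4)⟩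
    · rintro ⟨a, ha, rfl⟩; exact ⟨⟨⟨ha, ha⟩, le_refl _⟩, ⟨⟨ha, ha⟩, le_refl _⟩⟩
  have h1 : (T1 ∪ T2).card + (T1 ∩ T2).card = T1.card + T2.card :=
    Finset.card_union_add_card_inter _ _
  have h2 : (s.image (fun a => (a,a))).card = s.card :=
    Finset.card_image_of_injective _ (fun a b h => (Prod.ext_iff.mp h).1)
  rw [hunion, hinter, Finset.card_product, hcard, h2] at h1
  have hring : s.card * (s.card + 1) = s.card * s.card + s.card := by ring
  rw [hring]
  omega

lemma entry_bound {X : Matrix (Fin n) (Fin n) ℝ} (hX : X.PosSemidef)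
    (hdiag : ∀ i, X i i = 1) (i j : Fin n) : X i j ∈ Set.Icc (-1 : ℝ) 1 := by
  have hsym : X j i = X i j := by
    have := congrFun (congrFun hX.1 i) j
    simpa [conjTranspose_apply] using this
  have h := quad_nonneg hX (Pi.single i (-(X i j)) + Pi.single j 1)
  simp only [mulVec_add, dotProduct_add, add_dotProduct, mulVec_single,
    single_dotProduct, dotProduct_single, Pi.smul_apply, op_smul_eq_mul, col_apply] at h
  rw [hdiag i, hdiag j, hsym] at h
  constructor <;> nlinarith [h]

lemma exists_maximizer (C : Matrix (Fin n) (Fin n) ℝ) :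
    ∃ X : Matrix (Fin n) (Fin n) ℝ, (X.PosSemidef ∧ ∀ i, X i i = 1) ∧
      ∀ Y : Matrix (Fin n) (Fin n) ℝ, Y.PosSemidef → (∀ i, Y i i = 1) →
        (C * Y).trace ≤ (C * X).trace := by
  classical
  set F : Set (Matrix (Fin n) (Fin n) ℝ) := {X | X.PosSemidef ∧ ∀ i, X i i = 1} with hF
  have hne : F.Nonempty := ⟨1, Matrix.PosSemidef.one, fun i => by simp⟩
  have hsub : F ⊆ Set.pi Set.univ (fun _ : Fin n => Set.pi Set.univ
      (fun _ : Fin n => Set.Icc (-1 : ℝ) 1)) := by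
    rintro X ⟨h1, h2⟩ i _ j _
    exact entry_bound h1 h2 i j
  have hKcompact : IsCompact (Set.pi Set.univ (fun _ : Fin n => Set.pi Set.univ
      (fun _ : Fin n => Set.Icc (-1 : ℝ) 1))) :=
    isCompact_univ_pi (fun _ => isCompact_univ_pi (fun _ => isCompact_Icc))
  have happly : ∀ (i j : Fin n), Continuous (fun X : Matrix (Fin n) (Fin n) ℝ => X i j) :=
    fun i j => (continuous_apply j).comp (continuous_apply i)
  have hclosed : IsClosed F := by
    have h1 : IsClosed {X : Matrix (Fin n) (Fin n) ℝ | ∀ u, 0 ≤ u ⬝ᵥ X *ᵥ u} := by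
      rw [Set.setOf_forall]
      refine isClosed_iInter fun u => isClosed_le continuous_const ?_
      unfold dotProduct mulVec
      exact continuous_finset_sum _ fun i _ => (continuous_const.mul
        (continuous_finset_sum _ fun j _ => (happly i j).mul continuous_const))
    have h2 : IsClosed {X : Matrix (Fin n) (Fin n) ℝ | ∀ i j, X j i = X i j} := by
      rw [Set.setOf_forall]
      refine isClosed_iInter fun i => ?_
      rw [Set.setOf_forall]
      exact isClosed_iInter fun j => isClosed_eq (happly j i) (happly i j)
    have h3 : IsClosed {X : Matrix (Fin n) (Fin n) ℝ | ∀ i, X i i = 1} := by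
      rw [Set.setOf_forall]
      exact isClosed_iInter fun i => isClosed_eq (happly i i) continuous_const
    have hFeq : F = ({X : Matrix (Fin n) (Fin n) ℝ | ∀ u, 0 ≤ u ⬝ᵥ X *ᵥ u} ∩
        {X | ∀ i j, X j i = X i j}) ∩ {X | ∀ i, X i i = 1} := by
      ext X
      simp only [hF, Set.mem_setOf_eq, Set.mem_inter_iff]
      constructor
      · rintro ⟨h1, h2⟩
        refine ⟨⟨fun u => quad_nonneg h1 u, fun i j => ?_⟩, h2⟩
        have := congrFun (congrFun h1.1 i) j
        simpa [conjTranspose_apply] using this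
      · rintro ⟨⟨h1, h2⟩, h3⟩
        refine ⟨.of_dotProduct_mulVec_nonneg ?_ (fun u => by simpa using h1 u), h3⟩
        ext i j
        simp [conjTranspose_apply, h2 j i]
    rw [hFeq]
    exact ((h1.inter h2).inter h3)
  have hcomp : IsCompact F := hKcompact.of_isClosed_subset hclosed hsub
  have hcont : Continuous (fun X : Matrix (Fin n) (Fin n) ℝ => (C * X).trace) := by
    unfold Matrix.trace Matrix.diag
    refine continuous_finset_sum _ fun i _ => ?_
    simp only [Matrix.mul_apply]
    exact continuous_finset_sum _ fun j _ => continuous_const.mul (happly j i)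
  obtain ⟨X, hXF, hXmax⟩ := hcomp.exists_isMaxOn hne hcont.continuousOn
  exact ⟨X, hXF, fun Y h1 h2 => hXmax ⟨h1, h2⟩⟩

lemma exists_factor {n p : ℕ} {X : Matrix (Fin n) (Fin n) ℝ} (hX : X.PosSemidef)
    (hrank : X.rank ≤ p) : ∃ W : Matrix (Fin p) (Fin n) ℝ, X = Wᵀ * W := by
  classical
  obtain ⟨U, d, hUtU, hUUt, hXeq, hdnn, hrk⟩ := spectral_real hX.1
  have hd : ∀ i, 0 ≤ d i := hdnn hX
  set s := Finset.univ.filter (fun i => d i ≠ 0) with hs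
  have hcard : Fintype.card ↥s ≤ Fintype.card (Fin p) := by
    rw [Fintype.card_coe, Fintype.card_fin]
    omega
  obtain ⟨e⟩ := Function.Embedding.nonempty_of_card_le hcard
  set W : Matrix (Fin p) (Fin n) ℝ :=
    Matrix.of (fun k i => ∑ j : ↥s, if e j = k then Real.sqrt (d j) * U i j else 0) with hW
  refine ⟨W, ?_⟩
  ext i i'
  have hR : (Wᵀ * W) i i' = ∑ j : ↥s, d j * U i j * U i' j := by
    rw [Matrix.mul_apply]
    simp only [Matrix.transpose_apply, hW, Matrix.of_apply]
    have hRHS : ∀ k : Fin p,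
        (∑ j : ↥s, if e j = k then Real.sqrt (d j) * U i j else 0) *
        (∑ j : ↥s, if e j = k then Real.sqrt (d j) * U i' j else 0)
        = ∑ j : ↥s, ∑ j' : ↥s, (if e j = k then Real.sqrt (d j) * U i j else 0) *
            (if e j' = k then Real.sqrt (d j') * U i' j' else 0) := by
      intro k
      rw [Finset.sum_mul_sum]
    rw [Finset.sum_congr rfl (fun k _ => hRHS k), Finset.sum_comm]
    have hinner : ∀ j : ↥s, (∑ k : Fin p, ∑ j' : ↥s,
        (if e j = k then Real.sqrt (d j) * U i j else 0) *
        (if e j' = k then Real.sqrt (d j') * U i' j' else 0)) = d j * U i j * U i' j := by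
      intro j
      rw [Finset.sum_comm]
      have : ∀ j' : ↥s, (∑ k : Fin p, (if e j = k then Real.sqrt (d j) * U i j else 0) *
          (if e j' = k then Real.sqrt (d j') * U i' j' else 0)) =
          if j' = j then d j * U i j * U i' j else 0 := by
        intro j'
        rcases eq_or_ne j' j with rfl | hne
        · simp only [eq_self_iff_true, if_true]
          rw [Finset.sum_eq_single (e j')]
          · simp only [eq_self_iff_true, if_true]
            linear_combination (U i j' * U i' j') * Real.mul_self_sqrt (hd j')
          · intro k _ hk
            rw [if_neg (by exact fun h => hk h.symm), zero_mul]
          · intro h; exact absurd (Finset.mem_univ _) h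
        · rw [if_neg hne]
          apply Finset.sum_eq_zero
          intro k _
          rcases eq_or_ne (e j) k with rfl | hk
          · rw [if_neg (fun h : e j' = e j => hne (e.injective h)), mul_zero]
          · rw [if_neg hk, zero_mul]
      rw [Finset.sum_congr rfl (fun j' _ => this j'), Finset.sum_ite_eq' _ j
        (fun _ => d j * U i j * U i' j)]
      simp
    rw [Finset.sum_congr rfl (fun j _ => hinner j)]
  have hL : X i i' = ∑ j : ↥s, d j * U i j * U i' j := by
    rw [hXeq, Matrix.mul_apply]
    have : ∀ j, (U * Matrix.diagonal d) i j * Uᵀ j i' = d j * U i j * U i' j := by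
      intro j
      rw [Matrix.mul_diagonal, Matrix.transpose_apply]
      ring
    rw [Finset.sum_congr rfl (fun j _ => this j)]
    rw [show (∑ j : ↥s, d j * U i j * U i' j) = ∑ j ∈ s, d j * U i j * U i' j from
      Finset.sum_coe_sort s (fun j => d j * U i j * U i' j)]
    refine (Finset.sum_subset (Finset.subset_univ s) ?_).symm
    intro x _ hx
    have : d x = 0 := by
      by_contra h
      exact hx (by simp [hs, h])
    simp [this]
  rw [hL, hR]



lemma exists_direction {U : Matrix (Fin n) (Fin n) ℝ}
    (s : Finset (Fin n))
    (hbig : n < ((s ×ˢ s).filter fun q => q.1 ≤ q.2).card) :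
    ∃ S : Matrix (Fin n) (Fin n) ℝ, Sᵀ = S ∧ S ≠ 0 ∧
      (∀ i j, S i j ≠ 0 → i ∈ s ∧ j ∈ s) ∧ ∀ k, (U * S * Uᵀ) k k = 0 := by
  classical
  set P := (s ×ˢ s).filter fun q => q.1 ≤ q.2 with hP
  set Mmap : ((↥P) → ℝ) → Matrix (Fin n) (Fin n) ℝ := fun f =>
    Matrix.of fun i j => if h : (i, j) ∈ P then f ⟨(i, j), h⟩ else 0 with hMmap
  have hMadd : ∀ f g, Mmap (f + g) = Mmap f + Mmap g := by
    intro f g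
    ext i j
    simp only [hMmap, Matrix.of_apply, Matrix.add_apply, Pi.add_apply]
    by_cases h : (i, j) ∈ P <;> simp [h]
  have hMsmul : ∀ (c : ℝ) f, Mmap (c • f) = c • Mmap f := by
    intro c f
    ext i j
    simp only [hMmap, Matrix.of_apply, Matrix.smul_apply, Pi.smul_apply, smul_eq_mul]
    by_cases h : (i, j) ∈ P <;> simp [h]
  set Smap : ((↥P) → ℝ) → Matrix (Fin n) (Fin n) ℝ := fun f => Mmap f + (Mmap f)ᵀ with hSmap
  have hSadd : ∀ f g, Smap (f + g) = Smap f + Smap g := by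
    intro f g
    simp only [hSmap, hMadd, Matrix.transpose_add]
    abel
  have hSsmul : ∀ (c : ℝ) f, Smap (c • f) = c • Smap f := by
    intro c f
    simp only [hSmap, hMsmul, Matrix.transpose_smul, smul_add]
  set ψ : ((↥P) → ℝ) →ₗ[ℝ] (Fin n → ℝ) :=
    { toFun := fun f => fun k => (U * Smap f * Uᵀ) k k
      map_add' := by
        intro f g
        funext k
        simp only [hSadd, Matrix.mul_add, Matrix.add_mul, Matrix.add_apply, Pi.add_apply]
      map_smul' := by
        intro c f
        funext k
        simp only [hSsmul, Matrix.mul_smul, Matrix.smul_mul, Matrix.smul_apply,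
          Pi.smul_apply, RingHom.id_apply] } with hψ
  have hcard : n < Fintype.card ↥P := by
    rwa [Fintype.card_coe]
  have hnotinj : ¬ Function.Injective ψ := by
    intro hinj
    have h1 := LinearMap.finrank_le_finrank_of_injective hinj
    rw [Module.finrank_pi ℝ, Module.finrank_pi ℝ] at h1
    rw [Fintype.card_fin] at h1
    omega
  rw [Function.not_injective_iff] at hnotinj
  obtain ⟨f, g, hfg, hne⟩ := hnotinj
  set h := f - g with hh
  have hh0 : h ≠ 0 := sub_ne_zero_of_ne hne
  have hψh : ψ h = 0 := by
    rw [hh, map_sub, hfg, sub_self]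
  refine ⟨Smap h, ?_, ?_, ?_, ?_⟩
  · simp only [hSmap, Matrix.transpose_add, Matrix.transpose_transpose]
    abel
  · intro hS0
    apply hh0
    funext q
    obtain ⟨⟨i, j⟩, hq⟩ := q
    have hij : i ≤ j := by
      have := hq
      rw [hP, Finset.mem_filter] at this
      exact this.2
    have hentry := congrFun (congrFun hS0 i) j
    simp only [hSmap, Matrix.add_apply, Matrix.transpose_apply, hMmap, Matrix.of_apply,
      Matrix.zero_apply] at hentry
    rw [dif_pos hq] at hentry
    rcases eq_or_ne i j with rfl | hijne
    · rw [dif_pos hq] at hentry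
      have : h ⟨(i, i), hq⟩ = 0 := by linarith
      simpa using this
    · have hji : (j, i) ∉ P := by
        rw [hP, Finset.mem_filter]
        rintro ⟨-, hle⟩
        exact hijne (le_antisymm hij hle)
      rw [dif_neg hji] at hentry
      have : h ⟨(i, j), hq⟩ = 0 := by linarith
      simpa using this
  · intro i j hS
    simp only [hSmap, Matrix.add_apply, Matrix.transpose_apply, hMmap, Matrix.of_apply] at hS
    by_cases h1 : (i, j) ∈ P
    · rw [hP, Finset.mem_filter, Finset.mem_product] at h1
      exact ⟨h1.1.1, h1.1.2⟩
    · by_cases h2 : (j, i) ∈ P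
      · rw [hP, Finset.mem_filter, Finset.mem_product] at h2
        exact ⟨h2.1.2, h2.1.1⟩
      · rw [dif_neg h1, dif_neg h2] at hS
        simp at hS
  · intro k
    exact congrFun hψh k

end Helpers

section Main
open Finset

lemma rank_reduce {n : ℕ} (C : Matrix (Fin n) (Fin n) ℝ) {X : Matrix (Fin n) (Fin n) ℝ}
    (hX : X.PosSemidef) (hdiag : ∀ i, X i i = 1)
    (hopt : ∀ Y : Matrix (Fin n) (Fin n) ℝ, Y.PosSemidef → (∀ i, Y i i = 1) →
      (C * Y).trace ≤ (C * X).trace)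
    (hbig : 2 * n < X.rank * (X.rank + 1)) :
    ∃ X' : Matrix (Fin n) (Fin n) ℝ, X'.PosSemidef ∧ (∀ i, X' i i = 1) ∧
      (C * X').trace = (C * X).trace ∧ X'.rank < X.rank := by
  classical
  obtain ⟨U, d, hUtU, hUUt, hXeq, hdnn, hrk⟩ := spectral_real hX.1
  have hd : ∀ i, 0 ≤ d i := hdnn hX
  set s := Finset.univ.filter (fun i => d i ≠ 0) with hs
  have hPcard : n < ((s ×ˢ s).filter fun q => q.1 ≤ q.2).card := by
    have h1 := pairs_card s
    rw [← hrk] at h1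
    omega
  obtain ⟨S, hSsym, hSne, hSsupp, hSdiag⟩ := exists_direction (U := U) s hPcard
  set B : Matrix (Fin n) (Fin n) ℝ :=
    Matrix.of (fun i j => S i j / (Real.sqrt (d i) * Real.sqrt (d j))) with hB
  have hmem : ∀ i, i ∈ s ↔ d i ≠ 0 := by
    intro i
    rw [hs, Finset.mem_filter]
    simp
  have hSzero : ∀ i j, d i = 0 ∨ d j = 0 → S i j = 0 := by
    intro i j hij
    by_contra hne
    obtain ⟨h1, h2⟩ := hSsupp i j hne
    rw [hmem] at h1 h2
    tauto
  have hSB : ∀ i j, S i j = Real.sqrt (d i) * B i j * Real.sqrt (d j) := by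
    intro i j
    rcases eq_or_ne (d i) 0 with h | hi
    · rw [hSzero i j (Or.inl h), h, Real.sqrt_zero, zero_mul, zero_mul]
    rcases eq_or_ne (d j) 0 with h | hj
    · rw [hSzero i j (Or.inr h), h, Real.sqrt_zero, mul_zero]
    have hsi : Real.sqrt (d i) ≠ 0 := Real.sqrt_ne_zero'.mpr (lt_of_le_of_ne (hd i) (Ne.symm hi))
    have hsj : Real.sqrt (d j) ≠ 0 := Real.sqrt_ne_zero'.mpr (lt_of_le_of_ne (hd j) (Ne.symm hj))
    rw [hB]
    simp only [Matrix.of_apply]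
    field_simp
  have hBsupp : ∀ i j, d i = 0 → B i j = 0 := by
    intro i j h
    rw [hB]
    simp only [Matrix.of_apply]
    rw [hSzero i j (Or.inl h), zero_div]
  have hBne : B ≠ 0 := by
    intro h0
    apply hSne
    ext i j
    rw [hSB i j, h0]
    simp
  have hBherm : B.IsHermitian := by
    rw [Matrix.IsHermitian, conjT_eq_transpose]
    ext i j
    rw [Matrix.transpose_apply, hB]
    simp only [Matrix.of_apply]
    have : S j i = S i j := by
      have h := congrFun (congrFun hSsym i) j
      rwa [Matrix.transpose_apply] at h
    rw [this, mul_comm]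
  obtain ⟨Wb, μ, hWtW, hWWt, hBW, -, -⟩ := spectral_real hBherm
  have hμne : ∃ i, μ i ≠ 0 := by
    by_contra hall
    push_neg at hall
    apply hBne
    rw [hBW]
    have : Matrix.diagonal μ = 0 := by
      ext i j
      rcases eq_or_ne i j with rfl | hij
      · rw [Matrix.diagonal_apply_eq, hall i]; rfl
      · rw [Matrix.diagonal_apply_ne _ hij]; rfl
    rw [this, Matrix.mul_zero, Matrix.zero_mul]
  obtain ⟨i0, hi0⟩ := hμne
  rcases lt_or_gt_of_ne hi0 with hneg | hpos
  · exact step hopt hdiag hd hXeq hUtU hUUt hSdiag hSB hBsupp hBW hWtW hWWt ⟨i0, hneg⟩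
  · have hSdiag' : ∀ k, (U * (-S) * Uᵀ) k k = 0 := by
      intro k
      have : U * (-S) * Uᵀ = -(U * S * Uᵀ) := by
        rw [Matrix.mul_neg, Matrix.neg_mul]
      rw [this, Matrix.neg_apply, hSdiag k, neg_zero]
    have hSB' : ∀ i j, (-S) i j = Real.sqrt (d i) * (-B) i j * Real.sqrt (d j) := by
      intro i j
      rw [Matrix.neg_apply, Matrix.neg_apply, hSB i j]
      ring
    have hBsupp' : ∀ i j, d i = 0 → (-B) i j = 0 := by
      intro i j h
      rw [Matrix.neg_apply, hBsupp i j h, neg_zero]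
    have hBW' : -B = Wb * Matrix.diagonal (-μ) * Wbᵀ := by
      have hdn : Matrix.diagonal (-μ) = -Matrix.diagonal μ := by
        ext i j
        rcases eq_or_ne i j with rfl | hij
        · simp
        · simp [Matrix.diagonal_apply_ne _ hij]
      rw [hBW, hdn, Matrix.mul_neg, Matrix.neg_mul]
    exact step hopt hdiag hd hXeq hUtU hUUt hSdiag' hSB' hBsupp' hBW' hWtW hWWt
      ⟨i0, by simpa using hpos⟩

end Main
/-- `SDP C` is the supremum of `tr(C X)` over all symmetric positive semidefinite
matrices `X` with unit diagonal. -/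
noncomputable def SDP {n : ℕ} (C : Matrix (Fin n) (Fin n) ℝ) : ℝ :=
  sSup {t : ℝ | ∃ X : Matrix (Fin n) (Fin n) ℝ,
    X.PosSemidef ∧ (∀ i, X i i = 1) ∧ t = (C * X).trace}

/-- If `p² ≥ 2n` and `V*` is a global maximizer of `tr(C VᵀV)` over the oblique
manifold `Ob(p,n)`, then `(V*)ᵀV*` is a global maximizer of the max-cut SDP. -/
theorem global_maximizer_solves_sdp {n p : ℕ} (hn : 1 ≤ n) (hp : 1 ≤ p)
    (hpn : 2 * n ≤ p ^ 2)
    (C : Matrix (Fin n) (Fin n) ℝ) (hC : C.IsSymm)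
    (Vstar : Matrix (Fin p) (Fin n) ℝ)
    (hVstar : ∀ i, ∑ j, (Vstar j i) ^ 2 = 1)
    (hmax : ∀ W : Matrix (Fin p) (Fin n) ℝ, (∀ i, ∑ j, (W j i) ^ 2 = 1) →
      (C * (Wᵀ * W)).trace ≤ (C * (Vstarᵀ * Vstar)).trace) :
    (C * (Vstarᵀ * Vstar)).trace = SDP C ∧
    ∀ X : Matrix (Fin n) (Fin n) ℝ, X.PosSemidef → (∀ i, X i i = 1) →
      (C * X).trace ≤ (C * (Vstarᵀ * Vstar)).trace := by
  classical
  obtain ⟨X0, ⟨hX0psd, hX0diag⟩, hX0max⟩ := exists_maximizer C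
  set R : Set ℕ := {r | ∃ X : Matrix (Fin n) (Fin n) ℝ, (X.PosSemidef ∧ (∀ i, X i i = 1)) ∧
    (C * X).trace = (C * X0).trace ∧ X.rank = r} with hR
  have hRne : R.Nonempty := ⟨X0.rank, X0, ⟨hX0psd, hX0diag⟩, rfl, rfl⟩
  obtain ⟨X1, ⟨hX1psd, hX1diag⟩, htr1, hrk1⟩ := Nat.sInf_mem hRne
  have hopt1 : ∀ Y : Matrix (Fin n) (Fin n) ℝ, Y.PosSemidef → (∀ i, Y i i = 1) →
      (C * Y).trace ≤ (C * X1).trace := by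
    intro Y h1 h2
    rw [htr1]
    exact hX0max Y h1 h2
  have hrank1 : X1.rank ≤ p := by
    by_contra hgt
    push_neg at hgt
    have hbig : 2 * n < X1.rank * (X1.rank + 1) := by
      have h1 : p + 1 ≤ X1.rank := hgt
      have h2 : (p + 1) * (p + 2) ≤ X1.rank * (X1.rank + 1) :=
        Nat.mul_le_mul h1 (by omega)
      have h3 : (p + 1) * (p + 2) = p * p + 3 * p + 2 := by ring
      have h4 : 2 * n ≤ p * p := by
        have : p ^ 2 = p * p := by ring
        omega
      omega
    obtain ⟨X', hpsd', hdiag', htr', hrk'⟩ := rank_reduce C hX1psd hX1diag hopt1 hbig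
    have hmem' : X'.rank ∈ R := ⟨X', ⟨hpsd', hdiag'⟩, by rw [htr', htr1], rfl⟩
    have := Nat.sInf_le hmem'
    omega
  obtain ⟨W, hW⟩ := exists_factor hX1psd hrank1
  have hWcol : ∀ i, ∑ j, (W j i) ^ 2 = 1 := by
    intro i
    have h1 : (Wᵀ * W) i i = 1 := by rw [← hW]; exact hX1diag i
    rw [Matrix.mul_apply] at h1
    rw [← h1]
    exact Finset.sum_congr rfl fun j _ => by
      rw [Matrix.transpose_apply, pow_two]
  have hle : (C * X1).trace ≤ (C * (Vstarᵀ * Vstar)).trace := by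
    rw [hW]
    exact hmax W hWcol
  have hVpsd : (Vstarᵀ * Vstar).PosSemidef := by
    have := Matrix.posSemidef_conjTranspose_mul_self Vstar
    rwa [conjT_eq_transpose] at this
  have hVdiag : ∀ i, (Vstarᵀ * Vstar) i i = 1 := by
    intro i
    rw [Matrix.mul_apply, ← hVstar i]
    exact Finset.sum_congr rfl fun j _ => by
      rw [Matrix.transpose_apply, pow_two]
  have hub : ∀ X : Matrix (Fin n) (Fin n) ℝ, X.PosSemidef → (∀ i, X i i = 1) →
      (C * X).trace ≤ (C * (Vstarᵀ * Vstar)).trace := by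
    intro X h1 h2
    calc (C * X).trace ≤ (C * X0).trace := hX0max X h1 h2
      _ = (C * X1).trace := htr1.symm
      _ ≤ _ := hle
  refine ⟨?_, hub⟩
  apply le_antisymm
  · apply le_csSup
    · refine ⟨(C * (Vstarᵀ * Vstar)).trace, ?_⟩
      rintro t ⟨X, h1, h2, rfl⟩
      exact hub X h1 h2
    · exact ⟨Vstarᵀ * Vstar, hVpsd, hVdiag, rfl⟩
  · apply csSup_le
    · exact ⟨_, Vstarᵀ * Vstar, hVpsd, hVdiag, rfl⟩
    · rintro t ⟨X, h1, h2, rfl⟩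
      exact hub X h1 h2
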